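/- Let R be an associative unital ring with elements t, s satisfying t*s - s*t = s^2. Then for every natural number n, t^n * s = ∑_{i=0}^{n} (n!/(n-i)!) * s^(i+1) * t^(n-i). -/
import Mathlib

open Finset

private lemma mul_pow_comm_aux (R : Type*) [Ring R] (t s : R)
    (h : t * s - s * t = s ^ 2) (k : ℕ) :
    t * s ^ k = s ^ k * t + (k : R) * s ^ (k + 1) := by
  induction k with
  | zero => simp
  | succ k ih =>
    have hts : t * s = s * t + s ^ 2 := by rw [← h]; noncomm_ring
    calc t * s ^ (k + 1) = (t * s ^ k) * s := by rw [mul_assoc, ← pow_succ]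
      _ = (s ^ k * t + (k : R) * s ^ (k + 1)) * s := by rw [ih]
      _ = s ^ k * (t * s) + (k : R) * (s ^ (k + 1) * s) := by noncomm_ring
      _ = s ^ k * (s * t + s ^ 2) + (k : R) * s ^ (k + 2) := by rw [hts, ← pow_succ]
      _ = s ^ (k + 1) * t + ((k : ℕ) + 1 : R) * s ^ (k + 1 + 1) := by noncomm_ring
      _ = s ^ (k + 1) * t + (((k + 1 : ℕ)) : R) * s ^ (k + 1 + 1) := by push_cast; ring_nf

private lemma desc_version (R : Type*) [Ring R] (t s : R)
    (h : t * s - s * t = s ^ 2) (n : ℕ) :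
    t ^ n * s =
      ∑ i ∈ Finset.range (n + 1),
        ((Nat.descFactorial n i : ℕ) : R) * s ^ (i + 1) * t ^ (n - i) := by
  induction n with
  | zero => simp
  | succ n ih =>
    have step : t ^ (n + 1) * s = t * (t ^ n * s) := by
      rw [← mul_assoc, pow_succ']
    rw [step, ih, Finset.mul_sum]
    have expand : ∀ i ∈ Finset.range (n + 1),
        t * ((Nat.descFactorial n i : R) * s ^ (i + 1) * t ^ (n - i)) =
          (Nat.descFactorial n i : R) * s ^ (i + 1) * t ^ (n + 1 - i)
          + ((i + 1 : ℕ) : R) * (Nat.descFactorial n i : R) * s ^ (i + 2) * t ^ (n - i) := by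
      intro i hi
      have hi' : i ≤ n := Nat.lt_succ_iff.mp (Finset.mem_range.mp hi)
      have hc : t * (Nat.descFactorial n i : R) = (Nat.descFactorial n i : R) * t :=
        Commute.eq (Nat.cast_commute _ t).symm
      have hpow : t ^ (n + 1 - i) = t * t ^ (n - i) := by
        rw [← pow_succ']
        congr 1
        omega
      rw [← mul_assoc, ← mul_assoc, hc, mul_assoc _ t _,
        mul_pow_comm_aux R t s h (i + 1), hpow,
        show ((i + 1 : ℕ) : R) * ((Nat.descFactorial n i : ℕ) : R) =
          ((Nat.descFactorial n i : ℕ) : R) * ((i + 1 : ℕ) : R) from (Nat.cast_commute _ _).eq]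
      noncomm_ring
    rw [Finset.sum_congr rfl expand, Finset.sum_add_distrib]
    -- Peel i = 0 off the first sum on the LHS
    rw [Finset.sum_range_succ'
      (fun i => ((Nat.descFactorial n i : ℕ) : R) * s ^ (i + 1) * t ^ (n + 1 - i)) n]
    -- Peel i = 0 off the target sum (RHS)
    rw [Finset.sum_range_succ'
      (fun i => ((Nat.descFactorial (n + 1) i : ℕ) : R) * s ^ (i + 1) * t ^ (n + 1 - i)) (n + 1)]
    have key : ∀ i ∈ Finset.range (n + 1),
        ((Nat.descFactorial (n + 1) (i + 1) : ℕ) : R) * s ^ (i + 1 + 1) * t ^ (n + 1 - (i + 1)) =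
          ((Nat.descFactorial n (i + 1) : ℕ) : R) * s ^ (i + 1 + 1) * t ^ (n + 1 - (i + 1))
          + ((i + 1 : ℕ) : R) * (Nat.descFactorial n i : R) * s ^ (i + 2) * t ^ (n - i) := by
      intro i hi
      have hi' : i ≤ n := Nat.lt_succ_iff.mp (Finset.mem_range.mp hi)
      have hnat : Nat.descFactorial (n + 1) (i + 1) =
          Nat.descFactorial n (i + 1) + (i + 1) * Nat.descFactorial n i := by
        rw [Nat.succ_descFactorial_succ, Nat.descFactorial_succ]
        have : n + 1 = (n - i) + (i + 1) := by omega
        rw [this, add_mul]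
      have hsub : n + 1 - (i + 1) = n - i := by omega
      rw [hnat, hsub, Nat.cast_add, Nat.cast_mul, add_mul, add_mul,
        show ((i + 1 : ℕ) : R) * ((Nat.descFactorial n i : ℕ) : R) =
          ((Nat.descFactorial n i : ℕ) : R) * ((i + 1 : ℕ) : R) from (Nat.cast_commute _ _).eq]
    rw [Finset.sum_congr rfl key, Finset.sum_add_distrib]
    -- Peel the vanishing top term (i = n, descFactorial n (n+1) = 0) off the RHS c-sum
    rw [Finset.sum_range_succ
      (fun i => ((Nat.descFactorial n (i + 1) : ℕ) : R) * s ^ (i + 1 + 1) * t ^ (n + 1 - (i + 1))) n]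
    have hlast : ((Nat.descFactorial n (n + 1) : ℕ) : R) = 0 := by
      simp [Nat.descFactorial_eq_zero_iff_lt]
    simp only [hlast, zero_mul]
    have hsub2 : ∀ i, n + 1 - (i + 1) = n - i := fun i => by omega
    simp only [hsub2, Nat.sub_zero, Nat.descFactorial_zero, Nat.cast_one, pow_zero]
    abel

theorem pow_mul_comm_expansion (R : Type*) [Ring R] (t s : R)
    (h : t * s - s * t = s ^ 2) (n : ℕ) :
    t ^ n * s =
      ∑ i ∈ Finset.range (n + 1),
        ((Nat.factorial n / Nat.factorial (n - i) : ℕ) : R) * s ^ (i + 1) * t ^ (n - i) := by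
  rw [desc_version R t s h n]
  refine Finset.sum_congr rfl fun i hi => ?_
  have hi' : i ≤ n := Nat.lt_succ_iff.mp (Finset.mem_range.mp hi)
  rw [Nat.descFactorial_eq_div hi']
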